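/- arXiv:2009.11127 — 4 statements merged into one kernel-verified Lean document; each statement's English description precedes it below -/
import Mathlib

section
/- Let n ≥ 1 and let Γ be a group of invertible affine transformations of ℝⁿ, where each γ ∈ Γ acts by x ↦ A_γ · x + v_γ with A_γ an invertible n×n real matrix, and suppose the action of Γ on ℝⁿ is free (every γ ≠ id has no fixed point). Let S = {A_γ : γ ∈ Γ} be the set of linear parts, viewed as a subset of the space of n×n real matrices. If g is an n×n real matrix such that every multivariate real polynomial in the n² matrix entries (i.e., every p ∈ MvPolynomial (Fin n × Fin n) ℝ) that vanishes at every element of S also vanishes at g, then det(g − 1) = 0; that is, every element of the Zariski closure of the set of linear parts has 1 as an eigenvalue. -/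
open Matrix in
/-- Hirsch–Kostant–Sullivan for the Zariski closure: if a group `Γ` acts freely on `ℝⁿ`
by invertible affine transformations `x ↦ A γ *ᵥ x + v γ`, and `g` is a matrix lying in
the Zariski closure of the set of linear parts (every polynomial in the matrix entries
vanishing on all the `A γ` also vanishes at `g`), then `det (g - 1) = 0`. -/
theorem stmt1 {n : ℕ} (hn : 1 ≤ n) {Γ : Type*} [Group Γ]
    (A : Γ → Matrix (Fin n) (Fin n) ℝ) (v : Γ → (Fin n → ℝ))
    (hinv : ∀ γ, IsUnit (A γ))
    (hA1 : A 1 = 1) (hv1 : v 1 = 0)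
    (hAmul : ∀ γ δ, A (γ * δ) = A γ * A δ)
    (hvmul : ∀ γ δ, v (γ * δ) = A γ *ᵥ v δ + v γ)
    (hfree : ∀ γ : Γ, γ ≠ 1 → ∀ x : Fin n → ℝ, A γ *ᵥ x + v γ ≠ x)
    (g : Matrix (Fin n) (Fin n) ℝ)
    (hg : ∀ p : MvPolynomial (Fin n × Fin n) ℝ,
      (∀ γ : Γ, MvPolynomial.eval (fun ij => A γ ij.1 ij.2) p = 0) →
        MvPolynomial.eval (fun ij => g ij.1 ij.2) p = 0) :
    (g - 1).det = 0 := by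
  haveI : NeZero n := ⟨by omega⟩
  -- Every linear part has 1 as an eigenvalue.
  have key : ∀ γ : Γ, (A γ - 1).det = 0 := by
    intro γ
    by_cases hγ : γ = 1
    · subst hγ
      rw [hA1, sub_self]
      simp [Matrix.det_zero]
    · by_contra hdet
      have hunit : IsUnit (A γ - 1) :=
        (Matrix.isUnit_iff_isUnit_det _).mpr (isUnit_iff_ne_zero.mpr hdet)
      -- the fixed point
      set x : Fin n → ℝ := (A γ - 1)⁻¹ *ᵥ (-(v γ)) with hx
      apply hfree γ hγ x
      have h1 : (A γ - 1) *ᵥ x = -(v γ) := by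
        rw [hx, Matrix.mulVec_mulVec, Matrix.mul_nonsing_inv _
          (isUnit_iff_ne_zero.mpr hdet), Matrix.one_mulVec]
      have h2 : A γ *ᵥ x - x = -(v γ) := by
        rw [← h1, Matrix.sub_mulVec, Matrix.one_mulVec]
      linear_combination (norm := abel) h2
  -- The polynomial det(X - 1)
  set P : MvPolynomial (Fin n × Fin n) ℝ :=
    Matrix.det (Matrix.of fun i j : Fin n =>
      MvPolynomial.X (i, j) - if i = j then 1 else 0) with hP
  have heval : ∀ M : Matrix (Fin n) (Fin n) ℝ,
      MvPolynomial.eval (fun ij => M ij.1 ij.2) P = (M - 1).det := by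
    intro M
    rw [hP, RingHom.map_det]
    congr 1
    ext i j
    by_cases h : i = j <;> simp [h, Matrix.sub_apply, Matrix.one_apply]
  have := hg P (fun γ => by rw [heval]; exact key γ)
  rwa [heval] at this
end

section
/- For every δ ≥ 0 there exists a constant C ≥ 0 with the following property. Let X be a geodesic metric space (any two points are joined by a geodesic segment) in which every geodesic triangle is δ-thin. If l₁, l₂ : ℝ → X are complete isometric geodesics such that the extended Hausdorff distance between their images is finite, then the Hausdorff distance between the images of l₁ and l₂ is at most C. -/
/-- `γ` is a geodesic segment from `x` to `y`: defined on `[0, dist x y]`,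
starting at `x`, ending at `y`, and isometric on that interval. -/
def IsGeodesicSegment {X : Type*} [MetricSpace X] (x y : X) (γ : ℝ → X) : Prop :=
  γ 0 = x ∧ γ (dist x y) = y ∧
    ∀ s ∈ Set.Icc (0 : ℝ) (dist x y), ∀ t ∈ Set.Icc (0 : ℝ) (dist x y),
      dist (γ s) (γ t) = |s - t|

/-- The image of a geodesic segment from `x` to `y`. -/
def segImage {X : Type*} [MetricSpace X] (x y : X) (γ : ℝ → X) : Set X :=
  γ '' Set.Icc (0 : ℝ) (dist x y)

/-- `X` is a geodesic metric space: any two points are joined by a geodesic segment. -/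
def IsGeodesicSpace (X : Type*) [MetricSpace X] : Prop :=
  ∀ x y : X, ∃ γ : ℝ → X, IsGeodesicSegment x y γ

/-- Every geodesic triangle of `X` is `δ`-thin: each point of any side is within
distance `δ` of the union of the other two sides. -/
def ThinTriangles (X : Type*) [MetricSpace X] (δ : ℝ) : Prop :=
  ∀ (x y z : X) (γ₁ γ₂ γ₃ : ℝ → X),
    IsGeodesicSegment x y γ₁ → IsGeodesicSegment y z γ₂ → IsGeodesicSegment x z γ₃ →
    (∀ p ∈ segImage x y γ₁, Metric.infDist p (segImage y z γ₂ ∪ segImage x z γ₃) ≤ δ) ∧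
    (∀ p ∈ segImage y z γ₂, Metric.infDist p (segImage x y γ₁ ∪ segImage x z γ₃) ≤ δ) ∧
    (∀ p ∈ segImage x z γ₃, Metric.infDist p (segImage x y γ₁ ∪ segImage y z γ₂) ≤ δ)

/-- A reparametrized piece of a complete geodesic is a geodesic segment whose
image lies in the range of the line, and which passes through all intermediate
points of the line. -/
lemma line_seg {X : Type*} [MetricSpace X] (l : ℝ → X)
    (hl : ∀ s t : ℝ, dist (l s) (l t) = |s - t|) (s₀ s₁ : ℝ) :
    ∃ γ : ℝ → X, IsGeodesicSegment (l s₀) (l s₁) γ ∧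
      segImage (l s₀) (l s₁) γ ⊆ Set.range l ∧
      ∀ u : ℝ, min s₀ s₁ ≤ u → u ≤ max s₀ s₁ → l u ∈ segImage (l s₀) (l s₁) γ := by
  set e : ℝ := if s₀ ≤ s₁ then 1 else -1 with he
  refine ⟨fun u => l (s₀ + e * u), ?_, ?_, ?_⟩
  · have hd : dist (l s₀) (l s₁) = |s₀ - s₁| := hl s₀ s₁
    refine ⟨by simp, ?_, ?_⟩
    · rw [hd]
      by_cases h : s₀ ≤ s₁
      · simp only [he, if_pos h]
        rw [abs_of_nonpos (by linarith)]
        ring_nf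
      · simp only [he, if_neg h]
        rw [abs_of_pos (by push_neg at h; linarith)]
        ring_nf
    · intro s _ t _
      rw [hl]
      have : |e| = 1 := by
        by_cases h : s₀ ≤ s₁ <;> simp [he, h]
      calc |s₀ + e * s - (s₀ + e * t)| = |e| * |s - t| := by
            rw [← abs_mul]; ring_nf
        _ = |s - t| := by rw [this, one_mul]
  · rintro x ⟨u, _, rfl⟩
    exact ⟨s₀ + e * u, rfl⟩
  · intro u hu₀ hu₁
    have hd : dist (l s₀) (l s₁) = |s₀ - s₁| := hl s₀ s₁
    by_cases h : s₀ ≤ s₁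
    · refine ⟨u - s₀, ?_, ?_⟩
      · constructor
        · simp only [min_eq_left h] at hu₀; linarith
        · rw [hd, abs_of_nonpos (by linarith)]
          simp only [max_eq_right h] at hu₁; linarith
      · simp only [he, if_pos h]; ring_nf
    · push_neg at h
      refine ⟨s₀ - u, ?_, ?_⟩
      · constructor
        · simp only [max_eq_left h.le] at hu₁; linarith
        · rw [hd, abs_of_pos (by linarith)]
          simp only [min_eq_right h.le] at hu₀; linarith
      · simp only [he, if_neg (not_le.mpr h)]; ring_nf
    
/-- The image of a geodesic segment is compact. -/
lemma segImage_compact {X : Type*} [MetricSpace X] {x y : X} {γ : ℝ → X}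
    (h : IsGeodesicSegment x y γ) : IsCompact (segImage x y γ) := by
  apply isCompact_Icc.image_of_continuousOn
  have : LipschitzOnWith 1 γ (Set.Icc (0 : ℝ) (dist x y)) := by
    apply LipschitzOnWith.of_dist_le_mul
    intro s hs t ht
    rw [h.2.2 s hs t ht, Real.dist_eq, NNReal.coe_one, one_mul]
  exact this.continuousOn

lemma segImage_nonempty {X : Type*} [MetricSpace X] {x y : X} {γ : ℝ → X}
    (h : IsGeodesicSegment x y γ) : (segImage x y γ).Nonempty :=
  ⟨x, 0, ⟨le_refl 0, dist_nonneg⟩, h.1⟩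

lemma mem_segImage_start {X : Type*} [MetricSpace X] {x y : X} {γ : ℝ → X}
    (h : IsGeodesicSegment x y γ) : x ∈ segImage x y γ :=
  ⟨0, ⟨le_refl 0, dist_nonneg⟩, h.1⟩

/-- Points of a geodesic segment from `x` to `y` are within `dist x y` of `x`. -/
lemma segImage_dist_le {X : Type*} [MetricSpace X] {x y : X} {γ : ℝ → X}
    (h : IsGeodesicSegment x y γ) {w : X} (hw : w ∈ segImage x y γ) :
    dist w x ≤ dist x y := by
  obtain ⟨u, hu, rfl⟩ := hw
  have h0 : (0 : ℝ) ∈ Set.Icc (0 : ℝ) (dist x y) := ⟨le_refl 0, dist_nonneg⟩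
  calc dist (γ u) x = dist (γ u) (γ 0) := by rw [h.1]
    _ = |u - 0| := h.2.2 u hu 0 h0
    _ ≤ dist x y := by rw [sub_zero, abs_of_nonneg hu.1]; exact hu.2

/-- One-sided bound: each point of `l₁` is within `2δ` of the range of `l₂`. -/
lemma one_side (δ : ℝ) (hδ : 0 ≤ δ) (X : Type) [MetricSpace X]
    (hgeo : IsGeodesicSpace X) (hthin : ThinTriangles X δ) (l₁ l₂ : ℝ → X)
    (h₁ : ∀ s t : ℝ, dist (l₁ s) (l₁ t) = |s - t|)
    (h₂ : ∀ s t : ℝ, dist (l₂ s) (l₂ t) = |s - t|)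
    (hfin : EMetric.hausdorffEdist (Set.range l₁) (Set.range l₂) ≠ ⊤) (t₀ : ℝ) :
    Metric.infDist (l₁ t₀) (Set.range l₂) ≤ 2 * δ := by
  classical
  set M : ℝ := (EMetric.hausdorffEdist (Set.range l₁) (Set.range l₂)).toReal with hM
  have hM0 : 0 ≤ M := ENNReal.toReal_nonneg
  have hne₂ : (Set.range l₂).Nonempty := ⟨l₂ 0, 0, rfl⟩
  -- every point of range l₁ has a point of range l₂ at distance < M + 1
  have key : ∀ x ∈ Set.range l₁, ∃ q ∈ Set.range l₂, dist x q < M + 1 := by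
    intro x hx
    have h1 : EMetric.infEdist x (Set.range l₂) ≤
        EMetric.hausdorffEdist (Set.range l₁) (Set.range l₂) :=
      EMetric.infEdist_le_hausdorffEdist_of_mem hx
    have h2 : Metric.infDist x (Set.range l₂) ≤ M := by
      rw [Metric.infDist, hM]
      exact ENNReal.toReal_mono hfin h1
    have h3 : Metric.infDist x (Set.range l₂) < M + 1 := by linarith
    exact (Metric.infDist_lt_iff hne₂).mp h3
  set R : ℝ := 2 * δ + (M + 1) + 1 with hR
  have hRpos : 0 < R := by positivity
  set a : X := l₁ (t₀ - R) with ha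
  set b : X := l₁ (t₀ + R) with hb
  set p : X := l₁ t₀ with hp
  have hpa : dist p a = R := by
    rw [hp, ha, h₁]; rw [abs_of_nonneg (by linarith : (0:ℝ) ≤ t₀ - (t₀ - R))]; ring
  have hpb : dist p b = R := by
    rw [hp, hb, h₁]; rw [abs_of_nonpos (by linarith : t₀ - (t₀ + R) ≤ 0)]; ring
  obtain ⟨qm, hqm, hqmd⟩ := key a ⟨t₀ - R, rfl⟩
  obtain ⟨qp, hqp, hqpd⟩ := key b ⟨t₀ + R, rfl⟩
  obtain ⟨sm, rfl⟩ := hqm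
  obtain ⟨sp, rfl⟩ := hqp
  -- side from a to b along l₁
  obtain ⟨γ₁, hγ₁, _, hγ₁mem⟩ := line_seg l₁ h₁ (t₀ - R) (t₀ + R)
  -- sides of the first triangle
  obtain ⟨γ₂, hγ₂⟩ := hgeo b (l₂ sp)
  obtain ⟨γ₃, hγ₃⟩ := hgeo a (l₂ sp)
  -- p lies on side γ₁
  have hpmem : p ∈ segImage a b γ₁ := by
    apply hγ₁mem t₀
    · exact le_trans (min_le_left _ _) (by linarith)
    · exact le_trans (by linarith) (le_max_right (t₀ - R) (t₀ + R))
  -- thin triangle on a, b, qp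
  have hT1 := (hthin a b (l₂ sp) γ₁ γ₂ γ₃ hγ₁ hγ₂ hγ₃).1 p hpmem
  -- the union is compact nonempty, so infDist is attained
  have hcpt1 : IsCompact (segImage b (l₂ sp) γ₂ ∪ segImage a (l₂ sp) γ₃) :=
    (segImage_compact hγ₂).union (segImage_compact hγ₃)
  obtain ⟨w, hwmem, hwd⟩ := hcpt1.exists_infDist_eq_dist
    ((segImage_nonempty hγ₂).mono Set.subset_union_left) p
  rw [hwd] at hT1
  rcases hwmem with hw2 | hw3
  · -- w on the short side [b, qp] : contradiction
    exfalso
    have hwb : dist w b ≤ dist b (l₂ sp) := segImage_dist_le hγ₂ hw2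
    have : R ≤ dist p w + dist w b := by rw [← hpb]; exact dist_triangle p w b
    linarith [hT1, hwb, this, hqpd]
  · -- w on [a, qp]; use the second thin triangle on a, qm, qp
    obtain ⟨σ₁, hσ₁⟩ := hgeo a (l₂ sm)
    obtain ⟨σ₂, hσ₂, hσ₂sub, _⟩ := line_seg l₂ h₂ sm sp
    have hT2 := (hthin a (l₂ sm) (l₂ sp) σ₁ σ₂ γ₃ hσ₁ hσ₂ hγ₃).2.2 w hw3
    have hcpt2 : IsCompact (segImage a (l₂ sm) σ₁ ∪ segImage (l₂ sm) (l₂ sp) σ₂) :=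
      (segImage_compact hσ₁).union (segImage_compact hσ₂)
    obtain ⟨v, hvmem, hvd⟩ := hcpt2.exists_infDist_eq_dist
      ((segImage_nonempty hσ₁).mono Set.subset_union_left) w
    rw [hvd] at hT2
    rcases hvmem with hv1 | hv2
    · -- v on the short side [a, qm] : contradiction
      exfalso
      have hva : dist v a ≤ dist a (l₂ sm) := segImage_dist_le hσ₁ hv1
      have htri : dist p a ≤ dist p w + dist w v + dist v a :=
        dist_triangle4 p w v a
      rw [hpa] at htri
      linarith [hT1, hT2, hva, htri, hqmd]
    · -- v on the piece of l₂ : done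
      have hvl₂ : v ∈ Set.range l₂ := hσ₂sub hv2
      have : dist p v ≤ 2 * δ := by
        calc dist p v ≤ dist p w + dist w v := dist_triangle p w v
          _ ≤ 2 * δ := by linarith [hT1, hT2]
      exact le_trans (Metric.infDist_le_dist_of_mem hvl₂) this

/-- In a `δ`-hyperbolic geodesic space, two complete isometric geodesics at finite
Hausdorff distance are at Hausdorff distance at most a constant `C = C(δ)`. -/
theorem stmt6 (δ : ℝ) (hδ : 0 ≤ δ) :
    ∃ C : ℝ, 0 ≤ C ∧
      ∀ (X : Type) (_ : MetricSpace X), IsGeodesicSpace X → ThinTriangles X δ →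
        ∀ l₁ l₂ : ℝ → X,
          (∀ s t : ℝ, dist (l₁ s) (l₁ t) = |s - t|) →
          (∀ s t : ℝ, dist (l₂ s) (l₂ t) = |s - t|) →
          EMetric.hausdorffEdist (Set.range l₁) (Set.range l₂) ≠ ⊤ →
          EMetric.hausdorffEdist (Set.range l₁) (Set.range l₂) ≤ ENNReal.ofReal C := by
  refine ⟨2 * δ, by linarith, ?_⟩
  intro X _ hgeo hthin l₁ l₂ h₁ h₂ hfin
  have hfin' : EMetric.hausdorffEdist (Set.range l₂) (Set.range l₁) ≠ ⊤ := by
    show Metric.hausdorffEDist _ _ ≠ ⊤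
    rw [Metric.hausdorffEDist_comm]; exact hfin
  apply EMetric.hausdorffEdist_le_of_infEdist
  · rintro x ⟨t₀, rfl⟩
    have h := one_side δ hδ X hgeo hthin l₁ l₂ h₁ h₂ hfin t₀
    have hne : EMetric.infEdist (l₁ t₀) (Set.range l₂) ≠ ⊤ :=
      ne_top_of_le_ne_top hfin (EMetric.infEdist_le_hausdorffEdist_of_mem ⟨t₀, rfl⟩)
    rw [ENNReal.le_ofReal_iff_toReal_le (a := Metric.infEDist _ _) hne (by linarith)]
    exact h
  · rintro x ⟨t₀, rfl⟩
    have h := one_side δ hδ X hgeo hthin l₂ l₁ h₂ h₁ hfin' t₀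
    have hne : EMetric.infEdist (l₂ t₀) (Set.range l₁) ≠ ⊤ :=
      ne_top_of_le_ne_top hfin' (EMetric.infEdist_le_hausdorffEdist_of_mem ⟨t₀, rfl⟩)
    rw [ENNReal.le_ofReal_iff_toReal_le (a := Metric.infEDist _ _) hne (by linarith)]
    exact h
end

section
/- Let X be a metric space, let g : ℝ → X and gᵢ : ℝ → X (i ∈ ℕ) be complete isometric geodesics. Then ∫_ℝ dist(gᵢ t, g t) · 2^(−|t|) dt → 0 as i → ∞ if and only if gᵢ(t) → g(t) as i → ∞ for every t ∈ ℝ. -/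
open Filter MeasureTheory Set Real in
/-- `|t|^s * exp(-b|t|)` is integrable on `ℝ` for `b > 0`. -/
lemma aux_integrable_abs_pow_mul_exp_neg_abs (b : ℝ) (hb : 0 < b) (s : ℕ) :
    MeasureTheory.Integrable (fun t : ℝ => |t| ^ s * Real.exp (-b * |t|)) := by
  have hIoi : MeasureTheory.IntegrableOn
      (fun t : ℝ => |t| ^ s * Real.exp (-b * |t|)) (Set.Ioi 0) := by
    refine (integrableOn_rpow_mul_exp_neg_mul_rpow (p := 1) (s := (s : ℝ))
      (lt_of_lt_of_le (by norm_num) (Nat.cast_nonneg s)) one_pos hb).congr_fun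
      (fun x hx => ?_) measurableSet_Ioi
    have hx0 : 0 < x := hx
    beta_reduce
    rw [Real.rpow_one, Real.rpow_natCast, abs_of_pos hx0]
  rw [← MeasureTheory.integrableOn_univ, ← @Set.Iio_union_Ici ℝ _ (0 : ℝ),
    MeasureTheory.integrableOn_union, integrableOn_Ici_iff_integrableOn_Ioi]
  refine ⟨?_, hIoi⟩
  rw [← (MeasureTheory.Measure.measurePreserving_neg
      (volume : MeasureTheory.Measure ℝ)).integrableOn_comp_preimage
      (Homeomorph.neg ℝ).measurableEmbedding]
  simp only [Function.comp_def, abs_neg, Set.neg_preimage, Set.neg_Iio, neg_zero]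
  exact hIoi

open Filter in
/-- For complete isometric geodesics `gᵢ, g : ℝ → X`, convergence in the Gromov metric
`d_GX(gᵢ, g) = ∫ dist (gᵢ t) (g t) * 2 ^ (-|t|) dt → 0` is equivalent to pointwise
convergence `gᵢ(t) → g(t)` for every `t`. -/
theorem stmt9 {X : Type*} [MetricSpace X]
    (gs : ℕ → ℝ → X) (g : ℝ → X)
    (hgs : ∀ i, ∀ s t : ℝ, dist (gs i s) (gs i t) = |s - t|)
    (hg : ∀ s t : ℝ, dist (g s) (g t) = |s - t|) :
    Tendsto (fun i => ∫ t : ℝ, dist (gs i t) (g t) * (2 : ℝ) ^ (-|t|)) atTop (nhds 0) ↔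
      ∀ t : ℝ, Tendsto (fun i => gs i t) atTop (nhds (g t)) := by
  have hw : ∀ t : ℝ, (2 : ℝ) ^ (-|t|) = Real.exp (-Real.log 2 * |t|) := by
    intro t
    rw [Real.rpow_def_of_pos two_pos]
    ring_nf
  have hwpos : ∀ t : ℝ, (0 : ℝ) < (2 : ℝ) ^ (-|t|) := fun t =>
    Real.rpow_pos_of_pos two_pos _
  set F : ℕ → ℝ → ℝ := fun i t => dist (gs i t) (g t) * (2 : ℝ) ^ (-|t|) with hF
  have hFnonneg : ∀ i t, 0 ≤ F i t := fun i t =>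
    mul_nonneg dist_nonneg (hwpos t).le
  -- continuity of F i
  have hcont : ∀ i, Continuous (F i) := by
    intro i
    have h1 : Continuous (gs i) :=
      LipschitzWith.continuous (K := 1) (LipschitzWith.of_dist_le_mul fun s t => by
        rw [hgs i s t, Real.dist_eq]; simp)
    have h2 : Continuous g :=
      LipschitzWith.continuous (K := 1) (LipschitzWith.of_dist_le_mul fun s t => by
        rw [hg s t, Real.dist_eq]; simp)
    have hwc : Continuous fun t : ℝ => (2 : ℝ) ^ (-|t|) :=
      (Real.continuous_exp.comp (continuous_const.mul continuous_abs)).congr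
        fun t => (hw t).symm
    exact (h1.dist h2).mul hwc
  -- pointwise growth bound
  have hgrow : ∀ i t, dist (gs i t) (g t) ≤ dist (gs i 0) (g 0) + 2 * |t| := by
    intro i t
    calc dist (gs i t) (g t)
        ≤ dist (gs i t) (gs i 0) + dist (gs i 0) (g 0) + dist (g 0) (g t) :=
          dist_triangle4 _ _ _ _
      _ = dist (gs i 0) (g 0) + 2 * |t| := by
          rw [hgs i t 0, hg 0 t, sub_zero, zero_sub, abs_neg]
          ring
  -- integrable dominating bound
  have hBound : ∀ c : ℝ, MeasureTheory.Integrable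
      (fun t : ℝ => (c + 2 * |t|) * (2 : ℝ) ^ (-|t|)) := by
    intro c
    have h0 := (aux_integrable_abs_pow_mul_exp_neg_abs (Real.log 2) (Real.log_pos one_lt_two) 0)
    have h1 := (aux_integrable_abs_pow_mul_exp_neg_abs (Real.log 2) (Real.log_pos one_lt_two) 1)
    have := (h0.const_mul c).add (h1.const_mul 2)
    refine this.congr (Filter.Eventually.of_forall fun t => ?_)
    simp only [Pi.add_apply, pow_zero, pow_one, one_mul, hw]
    ring
  -- integrability of each F i
  have hInt : ∀ i, MeasureTheory.Integrable (F i) := by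
    intro i
    refine (hBound (dist (gs i 0) (g 0))).mono' ((hcont i).aestronglyMeasurable)
      (Filter.Eventually.of_forall fun t => ?_)
    rw [Real.norm_eq_abs, abs_of_nonneg (hFnonneg i t)]
    exact mul_le_mul_of_nonneg_right (hgrow i t) (hwpos t).le
  constructor
  · -- integral → 0 implies pointwise
    intro h t₀
    rw [tendsto_iff_dist_tendsto_zero]
    have key : Tendsto (fun i => dist (gs i t₀) (g t₀)) atTop (nhds 0) := by
      rw [Metric.tendsto_atTop]
      intro ε hε
      set r : ℝ := min (ε / 4) 1 with hr
      have hrpos : 0 < r := lt_min (by linarith) one_pos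
      have hr1 : r ≤ 1 := min_le_right _ _
      have hrε : r ≤ ε / 4 := min_le_left _ _
      set c : ℝ := ε / 2 * (2 : ℝ) ^ (-(|t₀| + 1)) with hc
      have hcpos : 0 < c := by positivity
      set δ : ℝ := c * (2 * r) with hδ
      have hδpos : 0 < δ := by positivity
      obtain ⟨N, hN⟩ := Metric.tendsto_atTop.mp h δ hδpos
      refine ⟨N, fun n hn => ?_⟩
      rw [Real.dist_eq, sub_zero, abs_of_nonneg dist_nonneg]
      by_contra hcon
      push_neg at hcon
      have hint_lt : (∫ t : ℝ, F n t) < δ := by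
        have := hN n hn
        rw [Real.dist_eq, sub_zero] at this
        exact (le_abs_self _).trans_lt this
      -- lower bound on the set Icc (t₀ - r) (t₀ + r)
      have hlow : ∀ t ∈ Set.Icc (t₀ - r) (t₀ + r), c ≤ F n t := by
        intro t ht
        have habs : |t - t₀| ≤ r := by
          rw [abs_sub_le_iff]
          constructor <;> [linarith [ht.2]; linarith [ht.1]]
        have hd : ε / 2 ≤ dist (gs n t) (g t) := by
          have : dist (gs n t₀) (g t₀) ≤
              dist (gs n t₀) (gs n t) + dist (gs n t) (g t) + dist (g t) (g t₀) :=
            dist_triangle4 _ _ _ _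
          rw [hgs n t₀ t, hg t t₀] at this
          have h1 : |t₀ - t| ≤ r := by rwa [abs_sub_comm]
          have h2 : |t - t₀| ≤ r := habs
          linarith
        have hwge : (2 : ℝ) ^ (-(|t₀| + 1)) ≤ (2 : ℝ) ^ (-|t|) := by
          apply Real.rpow_le_rpow_of_exponent_le one_le_two
          have : |t| ≤ |t₀| + r := by
            calc |t| = |t₀ + (t - t₀)| := by ring_nf
              _ ≤ |t₀| + |t - t₀| := abs_add_le _ _
              _ ≤ |t₀| + r := by linarith
          linarith
        calc c = ε / 2 * (2 : ℝ) ^ (-(|t₀| + 1)) := rfl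
          _ ≤ dist (gs n t) (g t) * (2 : ℝ) ^ (-|t|) :=
            mul_le_mul hd hwge (by positivity) dist_nonneg
      have hmeasI : MeasurableSet (Set.Icc (t₀ - r) (t₀ + r)) := measurableSet_Icc
      have hvol : (MeasureTheory.volume (Set.Icc (t₀ - r) (t₀ + r))).toReal = 2 * r := by
        rw [Real.volume_Icc, ENNReal.toReal_ofReal (by linarith)]
        ring
      have hIle : δ ≤ ∫ t in Set.Icc (t₀ - r) (t₀ + r), F n t := by
        have := MeasureTheory.setIntegral_ge_of_const_le hmeasI
          (by rw [Real.volume_Icc]; exact ENNReal.ofReal_ne_top) hlow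
          ((hInt n).integrableOn)
        have hvol' : MeasureTheory.volume.real (Set.Icc (t₀ - r) (t₀ + r)) = 2 * r := hvol
        rw [hvol', smul_eq_mul] at this
        rw [hδ]
        linarith
      have hII : (∫ t in Set.Icc (t₀ - r) (t₀ + r), F n t) ≤ ∫ t : ℝ, F n t :=
        MeasureTheory.setIntegral_le_integral (hInt n)
          (Filter.Eventually.of_forall (hFnonneg n))
      linarith
    exact key
  · -- pointwise implies integral → 0
    intro h
    have h0 : Tendsto (fun i => dist (gs i 0) (g 0)) atTop (nhds 0) :=
      tendsto_iff_dist_tendsto_zero.mp (h 0)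
    have hev : ∀ᶠ i in atTop, ∀ᵐ t : ℝ, ‖F i t‖ ≤ (1 + 2 * |t|) * (2 : ℝ) ^ (-|t|) := by
      filter_upwards [h0.eventually_lt_const one_pos] with i hi
      refine Filter.Eventually.of_forall fun t => ?_
      rw [Real.norm_eq_abs, abs_of_nonneg (hFnonneg i t)]
      refine mul_le_mul_of_nonneg_right ?_ (hwpos t).le
      have := hgrow i t
      linarith
    have := MeasureTheory.tendsto_integral_filter_of_dominated_convergence
      (μ := MeasureTheory.volume) (F := F) (f := fun _ => (0 : ℝ))
      (fun t : ℝ => (1 + 2 * |t|) * (2 : ℝ) ^ (-|t|))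
      (Filter.Eventually.of_forall fun i => (hcont i).aestronglyMeasurable)
      hev (hBound 1)
      (Filter.Eventually.of_forall fun t => by
        have := (tendsto_iff_dist_tendsto_zero.mp (h t)).mul_const ((2 : ℝ) ^ (-|t|))
        simpa using this)
    simpa using this
end

section
/- Work in ℝⁿ with coordinates x₁,…,xₙ (1-indexed), with n ≥ 1. Let k be an integer with 1 ≤ k and 2k ≤ n, and let C > 0. Let B ⊆ ℝⁿ be a set satisfying: (cone) 0 ∈ B, c·b ∈ B for all c ≥ 0 and b ∈ B, and b + b' ∈ B for all b, b' ∈ B; (chamber) B ⊆ 𝒞 = {x : x₁ ≥ x₂ ≥ ⋯ ≥ xₙ}; (involution-invariance) ι(B) ⊆ B, where (ι x)ᵢ = −x_{n+1−i}; (degeneracy) every b ∈ B with b ≠ 0 has bᵢ = 0 for some index i; (gap) b_k − b_{k+1} ≥ C·‖b‖ for every b ∈ B. Then: (a) for every b ∈ B with b ≠ 0 and every index i with bᵢ = 0 one has k+1 ≤ i ≤ n−k; and (b) if B ≠ {0} then 2k < n. -/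
/-- Combinatorial-convexity heart of Step (II) of Choi–Stecker (Proposition 4.2):
Let `B ⊆ ℝⁿ` be a convex cone contained in the closed Weyl chamber
`{x : x₁ ≥ ⋯ ≥ xₙ}` (coordinates `1`-indexed via `i : Fin n ↦ i+1`), invariant under
the opposition involution `(ι x)ᵢ = -x_{n+1-i}`, such that every nonzero `b ∈ B` has a
vanishing coordinate, and satisfying the gap condition `b_k - b_{k+1} ≥ C‖b‖`.
Then every vanishing coordinate of any nonzero `b ∈ B` has (1-indexed) index in
`[k+1, n-k]`, and if `B ≠ {0}` then `2k < n`. -/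
theorem stmt10 (n k : ℕ) (hn : 1 ≤ n) (hk : 1 ≤ k) (hkn : 2 * k ≤ n)
    (C : ℝ) (hC : 0 < C)
    (B : Set (EuclideanSpace ℝ (Fin n)))
    (hzero : (0 : EuclideanSpace ℝ (Fin n)) ∈ B)
    (hsmul : ∀ c : ℝ, 0 ≤ c → ∀ b ∈ B, c • b ∈ B)
    (hadd : ∀ b ∈ B, ∀ b' ∈ B, b + b' ∈ B)
    (hchamber : ∀ b ∈ B, ∀ i j : Fin n, i ≤ j → b j ≤ b i)
    (hinv : ∀ b ∈ B, (WithLp.toLp 2 (fun i : Fin n => -b i.rev) : EuclideanSpace ℝ (Fin n)) ∈ B)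
    (hdeg : ∀ b ∈ B, b ≠ 0 → ∃ i : Fin n, b i = 0)
    (hgap : ∀ b ∈ B, b ⟨k - 1, by omega⟩ - b ⟨k, by omega⟩ ≥ C * ‖b‖) :
    (∀ b ∈ B, b ≠ 0 → ∀ i : Fin n, b i = 0 →
        k + 1 ≤ (i : ℕ) + 1 ∧ (i : ℕ) + 1 ≤ n - k) ∧
      (B ≠ {0} → 2 * k < n) := by
  -- Core lemma: every vanishing coordinate of a nonzero element has 0-indexed index ≥ k.
  have key : ∀ b ∈ B, b ≠ 0 → ∀ i : Fin n, b i = 0 → k ≤ (i : ℕ) := by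
    intro b hb hb0 i hi
    by_contra hlt
    push_neg at hlt
    have hnb : 0 < ‖b‖ := norm_pos_iff.mpr hb0
    have hCb : 0 < C * ‖b‖ := mul_pos hC hnb
    have hK1 : b ⟨k - 1, by omega⟩ ≤ 0 := by
      have := hchamber b hb i ⟨k - 1, by omega⟩ (by simp [Fin.le_def]; omega)
      rw [hi] at this; exact this
    have hgapb := hgap b hb
    have hneg : ∀ j : Fin n, k ≤ (j : ℕ) → b j ≤ -(C * ‖b‖) := by
      intro j hj
      have := hchamber b hb ⟨k, by omega⟩ j (by simp [Fin.le_def]; omega)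
      linarith
    -- choose t > 0 avoiding the finitely many bad ratios
    obtain ⟨t, ht⟩ : ((Set.Ioi (0:ℝ)) \ (Set.range fun m : Fin n => b m.rev / b m)).Nonempty := by
      have h1 : (Set.Ioi (0:ℝ)).Infinite := Set.Ioi_infinite 0
      exact (h1.diff (Set.finite_range _)).nonempty
    have ht0 : 0 < t := ht.1
    have htT : ∀ m : Fin n, t ≠ b m.rev / b m := by
      intro m he
      exact ht.2 ⟨m, he.symm⟩
    obtain ⟨h, hhB, happ⟩ :
        ∃ h ∈ B, ∀ m : Fin n, h m = -b m.rev + t * b m := by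
      refine ⟨_, hadd _ (hinv b hb) _ (hsmul t ht0.le b hb), fun m => rfl⟩
    have hirev : k ≤ (i.rev : ℕ) := by
      have := Fin.val_rev i
      omega
    have hhi : 0 < h i := by
      rw [happ i, hi]
      have := hneg i.rev hirev
      nlinarith
    have hh0 : h ≠ 0 := by
      intro he
      rw [he] at hhi
      exact lt_irrefl _ hhi
    obtain ⟨m, hm⟩ := hdeg h hhB hh0
    rw [happ m] at hm
    by_cases hbm : b m = 0
    · have hmrev : b m.rev = 0 := by rw [hbm] at hm; linarith
      have hmk : (m : ℕ) < k := by
        by_contra h'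
        push_neg at h'
        have := hneg m h'
        rw [hbm] at this
        linarith
      have hrk : k ≤ (m.rev : ℕ) := by
        have := Fin.val_rev m
        omega
      have := hneg m.rev hrk
      rw [hmrev] at this
      linarith
    · exact htT m ((eq_div_iff hbm).mpr (by linarith))
  -- assemble both halves
  have main : ∀ b ∈ B, b ≠ 0 → ∀ i : Fin n, b i = 0 →
      k + 1 ≤ (i : ℕ) + 1 ∧ (i : ℕ) + 1 ≤ n - k := by
    intro b hb hb0 i hi
    have h1 := key b hb hb0 i hi
    have hinvB := hinv b hb
    have hinv0 : (WithLp.toLp 2 (fun j : Fin n => -b j.rev) : EuclideanSpace ℝ (Fin n)) ≠ 0 := by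
      intro he
      apply hb0
      ext j
      have h2 : -b j.rev.rev = (0 : EuclideanSpace ℝ (Fin n)) j.rev := congrArg (fun v => v j.rev) he
      rw [Fin.rev_rev] at h2
      have h3 : -b j = (0 : EuclideanSpace ℝ (Fin n)) j.rev := h2
      have h4 : (0 : EuclideanSpace ℝ (Fin n)) j.rev = 0 := rfl
      have h5 : (0 : EuclideanSpace ℝ (Fin n)) j = 0 := rfl
      linarith [h3, h4, h5]
    have h2 := key _ hinvB hinv0 i.rev (by show -b i.rev.rev = 0; rw [Fin.rev_rev, hi, neg_zero])
    have hv := Fin.val_rev i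
    have hvi := i.isLt
    constructor
    · omega
    · omega
  refine ⟨main, ?_⟩
  intro hBne
  obtain ⟨b, hb, hb0⟩ : ∃ b ∈ B, b ≠ 0 := by
    by_contra hno
    push_neg at hno
    exact hBne (Set.eq_singleton_iff_unique_mem.mpr ⟨hzero, hno⟩)
  obtain ⟨i, hi⟩ := hdeg b hb hb0
  have := main b hb hb0 i hi
  have hvi := i.isLt
  omega
end
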